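/- Let (Ω, 𝓕, Q) be a probability space, 𝓖 ⊆ 𝓕 a sub-σ-algebra, and X, Y ∈ L²(Q) real random variables. Then |cov(X, Y)| ≤ σ_{𝔼(X|𝓖)}·σ_{𝔼(Y|𝓖)} + √(σ_X² − σ²_{𝔼(X|𝓖)})·√(σ_Y² − σ²_{𝔼(Y|𝓖)}) ≤ σ_X·σ_Y, where 𝔼(·|𝓖) denotes conditional expectation given 𝓖. -/

import Mathlib

open MeasureTheory

section AuxCovCS

variable {Ω : Type*} {m m0 : MeasurableSpace Ω} {Q : Measure Ω}

private lemma aux_int_mul {f g : Ω → ℝ} (hf : MemLp f 2 Q) (hg : MemLp g 2 Q) :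
    Integrable (fun ω => f ω * g ω) Q := by
  have h := L2.integrable_inner (𝕜 := ℝ) (hf.toLp f) (hg.toLp g)
  refine h.congr ?_
  filter_upwards [hf.coeFn_toLp, hg.coeFn_toLp] with ω h1 h2
  simp [h1, h2, RCLike.inner_apply, conj_trivial, mul_comm]

private lemma aux_cs {f g : Ω → ℝ} (hf : MemLp f 2 Q) (hg : MemLp g 2 Q) :
    |∫ ω, f ω * g ω ∂Q| ≤
      Real.sqrt (∫ ω, f ω ^ 2 ∂Q) * Real.sqrt (∫ ω, g ω ^ 2 ∂Q) := by
  have h1 : (inner ℝ (hf.toLp f) (hg.toLp g) : ℝ) = ∫ ω, f ω * g ω ∂Q := by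
    rw [L2.inner_def]
    refine integral_congr_ae ?_
    filter_upwards [hf.coeFn_toLp, hg.coeFn_toLp] with ω ha hb
    simp [ha, hb, RCLike.inner_apply, conj_trivial, mul_comm]
  have h2 : ‖hf.toLp f‖ = Real.sqrt (∫ ω, f ω ^ 2 ∂Q) := by
    rw [norm_eq_sqrt_real_inner, L2.inner_def]
    congr 1
    refine integral_congr_ae ?_
    filter_upwards [hf.coeFn_toLp] with ω ha
    simp [ha, RCLike.inner_apply, conj_trivial, sq]
  have h3 : ‖hg.toLp g‖ = Real.sqrt (∫ ω, g ω ^ 2 ∂Q) := by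
    rw [norm_eq_sqrt_real_inner, L2.inner_def]
    congr 1
    refine integral_congr_ae ?_
    filter_upwards [hg.coeFn_toLp] with ω ha
    simp [ha, RCLike.inner_apply, conj_trivial, sq]
  calc |∫ ω, f ω * g ω ∂Q| = |(inner ℝ (hf.toLp f) (hg.toLp g) : ℝ)| := by rw [h1]
    _ ≤ ‖hf.toLp f‖ * ‖hg.toLp g‖ := abs_real_inner_le_norm _ _
    _ = _ := by rw [h2, h3]

private lemma aux_memL2_condexp (hm : m ≤ m0) [IsProbabilityMeasure Q] {f : Ω → ℝ}
    (hf : MemLp f 2 Q) : MemLp (Q[f|m]) 2 Q := by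
  set g : Lp ℝ 2 Q := (condExpL2 ℝ ℝ hm (hf.toLp f) : Lp ℝ 2 Q) with hg
  have hgm : AEStronglyMeasurable[m] g Q := aestronglyMeasurable_condExpL2 hm _
  have heq : (g : Ω → ℝ) =ᵐ[Q] Q[f|m] := by
    refine ae_eq_condExp_of_forall_setIntegral_eq hm (hf.integrable one_le_two)
      (fun s _ _ => (Lp.memLp g).integrable one_le_two |>.integrableOn)
      (fun s hs hμs => ?_) hgm
    rw [integral_condExpL2_eq hm (hf.toLp f) hs hμs.ne]
    exact setIntegral_congr_ae (hm s hs) (hf.coeFn_toLp.mono fun ω h _ => h)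
  exact (Lp.memLp g).ae_eq heq

private lemma aux_orth (hm : m ≤ m0) [IsProbabilityMeasure Q] {Z W : Ω → ℝ}
    (hZm : StronglyMeasurable[m] Z) (hZ : MemLp Z 2 Q) (hW : MemLp W 2 Q) :
    ∫ ω, Z ω * (W ω - (Q[W|m]) ω) ∂Q = 0 := by
  have hcW : MemLp (Q[W|m]) 2 Q := aux_memL2_condexp hm hW
  have hZW : Integrable (fun ω => Z ω * W ω) Q := aux_int_mul hZ hW
  have hZcW : Integrable (fun ω => Z ω * (Q[W|m]) ω) Q := aux_int_mul hZ hcW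
  have hpull : Q[Z * W|m] =ᵐ[Q] Z * Q[W|m] :=
    condExp_mul_of_stronglyMeasurable_left hZm hZW (hW.integrable one_le_two)
  have h1 : ∫ ω, Z ω * W ω ∂Q = ∫ ω, Z ω * (Q[W|m]) ω ∂Q := by
    calc ∫ ω, Z ω * W ω ∂Q = ∫ ω, (Q[Z * W|m]) ω ∂Q := (integral_condExp hm).symm
      _ = ∫ ω, Z ω * (Q[W|m]) ω ∂Q := integral_congr_ae hpull
  have h2 : ∫ ω, Z ω * (W ω - (Q[W|m]) ω) ∂Q
      = (∫ ω, Z ω * W ω ∂Q) - ∫ ω, Z ω * (Q[W|m]) ω ∂Q := by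
    rw [← integral_sub hZW hZcW]
    exact integral_congr_ae (Filter.Eventually.of_forall fun ω => by ring)
  rw [h2, h1, sub_self]

private lemma aux_var [IsProbabilityMeasure Q] {f : Ω → ℝ} (hf : MemLp f 2 Q) :
    ∫ ω, (f ω - ∫ ω', f ω' ∂Q) ^ 2 ∂Q = (∫ ω, f ω ^ 2 ∂Q) - (∫ ω, f ω ∂Q) ^ 2 := by
  set μ := ∫ ω', f ω' ∂Q with hμ
  have hf1 : Integrable f Q := hf.integrable one_le_two
  have hf2 : Integrable (fun ω => f ω ^ 2) Q := by
    simpa [pow_two] using aux_int_mul hf hf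
  have h1 : ∫ ω, (f ω - μ) ^ 2 ∂Q
      = ∫ ω, ((f ω ^ 2 - 2 * μ * f ω) + μ ^ 2) ∂Q :=
    integral_congr_ae (Filter.Eventually.of_forall fun ω => by ring)
  have ha : Integrable (fun ω => f ω ^ 2 - 2 * μ * f ω) Q := hf2.sub (hf1.const_mul (2 * μ))
  have hb : Integrable (fun ω => 2 * μ * f ω) Q := hf1.const_mul (2 * μ)
  rw [h1, integral_add ha (integrable_const _), integral_sub hf2 hb,
    MeasureTheory.integral_const_mul, integral_const]
  simp only [measure_univ, probReal_univ, ENNReal.toReal_one, smul_eq_mul, one_mul, ← hμ]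
  ring

private lemma aux_two_vec {p q r s : ℝ} (hp : 0 ≤ p) (hq : 0 ≤ q) (hr : 0 ≤ r) (hs : 0 ≤ s) :
    Real.sqrt p * Real.sqrt r + Real.sqrt q * Real.sqrt s
      ≤ Real.sqrt (p + q) * Real.sqrt (r + s) := by
  set a := Real.sqrt p with ha
  set b := Real.sqrt q with hb
  set c := Real.sqrt r with hc
  set d := Real.sqrt s with hd
  have ha2 : a ^ 2 = p := Real.sq_sqrt hp
  have hb2 : b ^ 2 = q := Real.sq_sqrt hq
  have hc2 : c ^ 2 = r := Real.sq_sqrt hr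
  have hd2 : d ^ 2 = s := Real.sq_sqrt hs
  have ha0 : 0 ≤ a := Real.sqrt_nonneg _
  have hb0 : 0 ≤ b := Real.sqrt_nonneg _
  have hc0 : 0 ≤ c := Real.sqrt_nonneg _
  have hd0 : 0 ≤ d := Real.sqrt_nonneg _
  have key : (a * c + b * d) ^ 2 ≤ (p + q) * (r + s) := by
    nlinarith [sq_nonneg (a * d - b * c)]
  have h1 : a * c + b * d ≤ Real.sqrt ((p + q) * (r + s)) := by
    have h2 := Real.sqrt_le_sqrt key
    rwa [Real.sqrt_sq (by positivity)] at h2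
  rwa [Real.sqrt_mul (by linarith)] at h1

end AuxCovCS

/-- **Enhanced Cauchy–Schwarz for covariance via conditioning.** -/
theorem cov_le_D_condexp_le_sigma_mul {Ω : Type*} {m m0 : MeasurableSpace Ω}
    (hm : m ≤ m0) (Q : Measure Ω) [IsProbabilityMeasure Q] (X Y : Ω → ℝ)
    (hX : MemLp X 2 Q) (hY : MemLp Y 2 Q)
    (cov σX σY σcX σcY : ℝ)
    (hcov : cov = ∫ ω, (X ω - ∫ ω', X ω' ∂Q) * (Y ω - ∫ ω', Y ω' ∂Q) ∂Q)
    (hσX : σX = Real.sqrt ((∫ ω, X ω ^ 2 ∂Q) - (∫ ω, X ω ∂Q) ^ 2))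
    (hσY : σY = Real.sqrt ((∫ ω, Y ω ^ 2 ∂Q) - (∫ ω, Y ω ∂Q) ^ 2))
    (hσcX : σcX = Real.sqrt ((∫ ω, (Q[X|m]) ω ^ 2 ∂Q) - (∫ ω, (Q[X|m]) ω ∂Q) ^ 2))
    (hσcY : σcY = Real.sqrt ((∫ ω, (Q[Y|m]) ω ^ 2 ∂Q) - (∫ ω, (Q[Y|m]) ω ∂Q) ^ 2)) :
    |cov| ≤ σcX * σcY + Real.sqrt (σX ^ 2 - σcX ^ 2) * Real.sqrt (σY ^ 2 - σcY ^ 2) ∧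
    σcX * σcY + Real.sqrt (σX ^ 2 - σcX ^ 2) * Real.sqrt (σY ^ 2 - σcY ^ 2) ≤ σX * σY := by
  have hXi : Integrable X Q := hX.integrable one_le_two
  have hYi : Integrable Y Q := hY.integrable one_le_two
  set EX := ∫ ω, X ω ∂Q with hEX
  set EY := ∫ ω, Y ω ∂Q with hEY
  have hcX : MemLp (Q[X|m]) 2 Q := aux_memL2_condexp hm hX
  have hcY : MemLp (Q[Y|m]) 2 Q := aux_memL2_condexp hm hY
  set A : Ω → ℝ := fun ω => (Q[X|m]) ω - EX with hA_def
  set B : Ω → ℝ := fun ω => X ω - (Q[X|m]) ω with hB_def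
  set C : Ω → ℝ := fun ω => (Q[Y|m]) ω - EY with hC_def
  set D : Ω → ℝ := fun ω => Y ω - (Q[Y|m]) ω with hD_def
  have hA : MemLp A 2 Q := hcX.sub (memLp_const EX)
  have hB : MemLp B 2 Q := hX.sub hcX
  have hC : MemLp C 2 Q := hcY.sub (memLp_const EY)
  have hD : MemLp D 2 Q := hY.sub hcY
  have hAm : StronglyMeasurable[m] A :=
    stronglyMeasurable_condExp.sub stronglyMeasurable_const
  have hCm : StronglyMeasurable[m] C :=
    stronglyMeasurable_condExp.sub stronglyMeasurable_const
  set iA := ∫ ω, A ω ^ 2 ∂Q with hiA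
  set iB := ∫ ω, B ω ^ 2 ∂Q with hiB
  set iC := ∫ ω, C ω ^ 2 ∂Q with hiC
  set iD := ∫ ω, D ω ^ 2 ∂Q with hiD
  have hiA0 : 0 ≤ iA := integral_nonneg fun ω => sq_nonneg _
  have hiB0 : 0 ≤ iB := integral_nonneg fun ω => sq_nonneg _
  have hiC0 : 0 ≤ iC := integral_nonneg fun ω => sq_nonneg _
  have hiD0 : 0 ≤ iD := integral_nonneg fun ω => sq_nonneg _
  have hEcX : ∫ ω, (Q[X|m]) ω ∂Q = EX := integral_condExp hm
  have hEcY : ∫ ω, (Q[Y|m]) ω ∂Q = EY := integral_condExp hm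
  -- orthogonality relations
  have hAD : ∫ ω, A ω * D ω ∂Q = 0 := aux_orth hm hAm hA hY
  have hCB : ∫ ω, C ω * B ω ∂Q = 0 := aux_orth hm hCm hC hX
  have hAB : ∫ ω, A ω * B ω ∂Q = 0 := aux_orth hm hAm hA hX
  have hCD : ∫ ω, C ω * D ω ∂Q = 0 := aux_orth hm hCm hC hY
  have hBC : ∫ ω, B ω * C ω ∂Q = 0 := by
    rw [← hCB]; exact integral_congr_ae (Filter.Eventually.of_forall fun ω => mul_comm _ _)
  -- covariance decomposition
  have hcov2 : cov = (∫ ω, A ω * C ω ∂Q) + ∫ ω, B ω * D ω ∂Q := by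
    rw [hcov]
    have hpt : ∀ ω, (X ω - EX) * (Y ω - EY)
        = A ω * C ω + (A ω * D ω + (B ω * C ω + B ω * D ω)) := fun ω => by
      simp only [hA_def, hB_def, hC_def, hD_def]; ring
    have i1 : Integrable (fun ω => B ω * C ω + B ω * D ω) Q :=
      (aux_int_mul hB hC).add (aux_int_mul hB hD)
    have i2 : Integrable (fun ω => A ω * D ω + (B ω * C ω + B ω * D ω)) Q :=
      (aux_int_mul hA hD).add i1
    rw [integral_congr_ae (Filter.Eventually.of_forall hpt),
      integral_add (aux_int_mul hA hC) i2,
      integral_add (aux_int_mul hA hD) i1,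
      integral_add (aux_int_mul hB hC) (aux_int_mul hB hD), hAD, hBC]
    ring
  -- variances
  have hvarX : (∫ ω, X ω ^ 2 ∂Q) - EX ^ 2 = iA + iB := by
    rw [← aux_var hX, ← hEX]
    have hpt : ∀ ω, (X ω - EX) ^ 2 = A ω ^ 2 + (2 * (A ω * B ω) + B ω ^ 2) := fun ω => by
      simp only [hA_def, hB_def]; ring
    have hA2 : Integrable (fun ω => A ω ^ 2) Q := by simpa [pow_two] using aux_int_mul hA hA
    have hB2 : Integrable (fun ω => B ω ^ 2) Q := by simpa [pow_two] using aux_int_mul hB hB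
    have hAB2 : Integrable (fun ω => 2 * (A ω * B ω)) Q := (aux_int_mul hA hB).const_mul 2
    have i1 : Integrable (fun ω => 2 * (A ω * B ω) + B ω ^ 2) Q := hAB2.add hB2
    rw [integral_congr_ae (Filter.Eventually.of_forall hpt),
      integral_add hA2 i1, integral_add hAB2 hB2,
      MeasureTheory.integral_const_mul, hAB]
    ring
  have hvarY : (∫ ω, Y ω ^ 2 ∂Q) - EY ^ 2 = iC + iD := by
    rw [← aux_var hY, ← hEY]
    have hpt : ∀ ω, (Y ω - EY) ^ 2 = C ω ^ 2 + (2 * (C ω * D ω) + D ω ^ 2) := fun ω => by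
      simp only [hC_def, hD_def]; ring
    have hC2 : Integrable (fun ω => C ω ^ 2) Q := by simpa [pow_two] using aux_int_mul hC hC
    have hD2 : Integrable (fun ω => D ω ^ 2) Q := by simpa [pow_two] using aux_int_mul hD hD
    have hCD2 : Integrable (fun ω => 2 * (C ω * D ω)) Q := (aux_int_mul hC hD).const_mul 2
    have i1 : Integrable (fun ω => 2 * (C ω * D ω) + D ω ^ 2) Q := hCD2.add hD2
    rw [integral_congr_ae (Filter.Eventually.of_forall hpt),
      integral_add hC2 i1, integral_add hCD2 hD2,
      MeasureTheory.integral_const_mul, hCD]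
    ring
  have hvarcX : (∫ ω, (Q[X|m]) ω ^ 2 ∂Q) - (∫ ω, (Q[X|m]) ω ∂Q) ^ 2 = iA := by
    rw [← aux_var hcX, hiA]
    exact integral_congr_ae (Filter.Eventually.of_forall fun ω => by
      simp only [hA_def, hEcX])
  have hvarcY : (∫ ω, (Q[Y|m]) ω ^ 2 ∂Q) - (∫ ω, (Q[Y|m]) ω ∂Q) ^ 2 = iC := by
    rw [← aux_var hcY, hiC]
    exact integral_congr_ae (Filter.Eventually.of_forall fun ω => by
      simp only [hC_def, hEcY])
  have hσcX' : σcX = Real.sqrt iA := by rw [hσcX, hvarcX]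
  have hσcY' : σcY = Real.sqrt iC := by rw [hσcY, hvarcY]
  have hσX' : σX = Real.sqrt (iA + iB) := by rw [hσX, hvarX]
  have hσY' : σY = Real.sqrt (iC + iD) := by rw [hσY, hvarY]
  have hσX2 : σX ^ 2 = iA + iB := by
    rw [hσX', Real.sq_sqrt (by linarith)]
  have hσY2 : σY ^ 2 = iC + iD := by
    rw [hσY', Real.sq_sqrt (by linarith)]
  have hσcX2 : σcX ^ 2 = iA := by rw [hσcX', Real.sq_sqrt hiA0]
  have hσcY2 : σcY ^ 2 = iC := by rw [hσcY', Real.sq_sqrt hiC0]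
  have hdiffX : σX ^ 2 - σcX ^ 2 = iB := by rw [hσX2, hσcX2]; ring
  have hdiffY : σY ^ 2 - σcY ^ 2 = iD := by rw [hσY2, hσcY2]; ring
  constructor
  · -- first inequality
    rw [hcov2, hdiffX, hdiffY, hσcX', hσcY']
    calc |(∫ ω, A ω * C ω ∂Q) + ∫ ω, B ω * D ω ∂Q|
        ≤ |∫ ω, A ω * C ω ∂Q| + |∫ ω, B ω * D ω ∂Q| := abs_add_le _ _
      _ ≤ Real.sqrt iA * Real.sqrt iC + Real.sqrt iB * Real.sqrt iD :=
          add_le_add (aux_cs hA hC) (aux_cs hB hD)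
  · -- second inequality
    rw [hdiffX, hdiffY, hσcX', hσcY', hσX', hσY']
    exact aux_two_vec hiA0 hiB0 hiC0 hiD0
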